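/- arXiv:2411.01302 — 2 statements merged into one kernel-verified Lean document; each statement's English description precedes it below -/
import Mathlib

section
/- There exists a constant L > 0, depending only on B, R and C (and in particular independent of γ, f, g and r), such that for every γ > 0 and all z, z', Z, Z' ∈ ℝ^d with |z| ≤ C, |Z| ≤ C and |Z'| ≤ C: |G_g(z', Z') − G(z, Z)| ≤ L(1 + e^{L/γ} + γ^{-1} e^{L/γ}) |z' − z| + L |Z' − Z| + L(1 + γ^{-1} e^{L/γ}) · sup_{a∈𝒜} |(f(a) − g(a))·z'|. -/
open MeasureTheory
open scoped RealInnerProductSpace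

/-- The Gibbs probability density `π_z(a) ∝ exp((f(a)·z + r(a))/γ)` on the set `𝒜`. -/
noncomputable def gibbs {m d : ℕ} (𝒜 : Set (EuclideanSpace ℝ (Fin m))) (γ : ℝ)
    (f : EuclideanSpace ℝ (Fin m) → EuclideanSpace ℝ (Fin d))
    (r : EuclideanSpace ℝ (Fin m) → ℝ)
    (z : EuclideanSpace ℝ (Fin d)) (a : EuclideanSpace ℝ (Fin m)) : ℝ :=
  Real.exp ((⟪f a, z⟫ + r a) / γ) /
    ∫ a' in 𝒜, Real.exp ((⟪f a', z⟫ + r a') / γ)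

/-- `G_ρ(z,Z) = ∫_𝒜 (f(a)·Z + r(a) − γ log ρ_z(a)) ρ_z(a) da`, where `ρ_z` is the
Gibbs density built from the drift `g` (and `G = G_π` corresponds to `g = f`). -/
noncomputable def gibbsG {m d : ℕ} (𝒜 : Set (EuclideanSpace ℝ (Fin m))) (γ : ℝ)
    (f g : EuclideanSpace ℝ (Fin m) → EuclideanSpace ℝ (Fin d))
    (r : EuclideanSpace ℝ (Fin m) → ℝ)
    (z Z : EuclideanSpace ℝ (Fin d)) : ℝ :=
  ∫ a in 𝒜, (⟪f a, Z⟫ + r a - γ * Real.log (gibbs 𝒜 γ g r z a)) * gibbs 𝒜 γ g r z a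

section helpers
variable {m : ℕ} {𝒜 : Set (EuclideanSpace ℝ (Fin m))}

lemma bddInt (hA : MeasurableSet 𝒜) (hfin : volume 𝒜 < ⊤)
    {h : EuclideanSpace ℝ (Fin m) → ℝ} (hm : Measurable h) {K : ℝ}
    (hb : ∀ a ∈ 𝒜, |h a| ≤ K) : IntegrableOn h 𝒜 := by
  refine Integrable.mono' (g := fun _ => K) (integrableOn_const (C := K) hfin.ne)
    hm.aestronglyMeasurable.restrict ?_
  filter_upwards [ae_restrict_mem hA] with a ha
  simpa [Real.norm_eq_abs] using hb a ha

lemma Npos (hA : MeasurableSet 𝒜) (hfin : volume 𝒜 < ⊤) (hpos : 0 < volume 𝒜)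
    {w : EuclideanSpace ℝ (Fin m) → ℝ} (hm : Measurable w) {K : ℝ}
    (hb : ∀ a ∈ 𝒜, |w a| ≤ K) :
    0 < ∫ a in 𝒜, Real.exp (w a) := by
  have hint : IntegrableOn (fun a => Real.exp (w a)) 𝒜 := by
    refine bddInt hA hfin hm.exp (K := Real.exp K) (fun a ha => ?_)
    rw [abs_of_pos (Real.exp_pos _)]
    exact Real.exp_le_exp.2 ((abs_le.1 (hb a ha)).2)
  have h1 : ∫ _a in 𝒜, Real.exp (-K) ≤ ∫ a in 𝒜, Real.exp (w a) := by
    refine setIntegral_mono_on (integrableOn_const (C := Real.exp (-K)) hfin.ne) hint hA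
      (fun a ha => Real.exp_le_exp.2 ?_)
    have := (abs_le.1 (hb a ha)).1; linarith
  have h2 : 0 < (volume 𝒜).toReal := ENNReal.toReal_pos hpos.ne' hfin.ne
  have h3 : ∫ _a in 𝒜, Real.exp (-K) = (volume 𝒜).toReal * Real.exp (-K) := by
    rw [setIntegral_const, smul_eq_mul, measureReal_def]
  nlinarith [Real.exp_pos (-K)]

/-- `|∫ h·p| ≤ K` for a probability density `p` and `|h| ≤ K` on `𝒜`. -/
lemma abs_int_density_le (hA : MeasurableSet 𝒜) (hfin : volume 𝒜 < ⊤)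
    {p : EuclideanSpace ℝ (Fin m) → ℝ} (hpm : Measurable p) (hp0 : ∀ a, 0 ≤ p a)
    {Kp : ℝ} (hpb : ∀ a ∈ 𝒜, |p a| ≤ Kp) (hp1 : ∫ a in 𝒜, p a = 1)
    {h : EuclideanSpace ℝ (Fin m) → ℝ} (hm : Measurable h)
    {K : ℝ} (hb : ∀ a ∈ 𝒜, |h a| ≤ K) :
    |∫ a in 𝒜, h a * p a| ≤ K := by
  have hint : IntegrableOn (fun a => h a * p a) 𝒜 := by
    refine bddInt hA hfin (hm.mul hpm) (K := K * Kp) (fun a ha => ?_)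
    rw [abs_mul]
    exact mul_le_mul (hb a ha) (hpb a ha) (abs_nonneg _) ((abs_nonneg (h a)).trans (hb a ha))
  have hKp_int : IntegrableOn (fun a => K * p a) 𝒜 := (bddInt hA hfin hpm hpb).const_mul K
  calc |∫ a in 𝒜, h a * p a| ≤ ∫ a in 𝒜, |h a| * |p a| := by
        simpa [Real.norm_eq_abs] using
          norm_integral_le_integral_norm (μ := volume.restrict 𝒜) (fun a => h a * p a)
    _ ≤ ∫ a in 𝒜, K * p a := by
        refine setIntegral_mono_on ?_ hKp_int hA (fun a ha => ?_)
        · simpa [abs_mul, IntegrableOn] using hint.abs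
        · rw [abs_of_nonneg (hp0 a)]
          exact mul_le_mul_of_nonneg_right (hb a ha) (hp0 a)
    _ = K := by rw [integral_const_mul, hp1, mul_one]

lemma gibbsG_eq {d : ℕ}
    (hA : MeasurableSet 𝒜) (hfin : volume 𝒜 < ⊤) (hpos : 0 < volume 𝒜)
    {γ : ℝ} (hγ : 0 < γ)
    {f g : EuclideanSpace ℝ (Fin m) → EuclideanSpace ℝ (Fin d)}
    {r : EuclideanSpace ℝ (Fin m) → ℝ}
    (hfm : Measurable f) (hgm : Measurable g) (hrm : Measurable r)
    {B R : ℝ} (hB : 0 ≤ B) (hfb : ∀ a ∈ 𝒜, ‖f a‖ ≤ B) (hgb : ∀ a ∈ 𝒜, ‖g a‖ ≤ B)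
    (hrb : ∀ a ∈ 𝒜, |r a| ≤ R)
    (z Z : EuclideanSpace ℝ (Fin d)) :
    gibbsG 𝒜 γ f g r z Z =
      (∫ a in 𝒜, (⟪f a, Z⟫ - ⟪g a, z⟫) * gibbs 𝒜 γ g r z a) +
        γ * Real.log (∫ a in 𝒜, Real.exp ((⟪g a, z⟫ + r a) / γ)) := by
  set N := ∫ a in 𝒜, Real.exp ((⟪g a, z⟫ + r a) / γ) with hNdef
  have hwm : Measurable fun a => (⟪g a, z⟫ + r a) / γ :=
    ((hgm.inner measurable_const).add hrm).div_const γ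
  have hwb : ∀ a ∈ 𝒜, |(⟪g a, z⟫ + r a) / γ| ≤ (B * ‖z‖ + R) / γ := by
    intro a ha
    rw [abs_div, abs_of_pos hγ]
    have h1 : |⟪g a, z⟫| ≤ B * ‖z‖ :=
      (abs_real_inner_le_norm _ _).trans
        (mul_le_mul_of_nonneg_right (hgb a ha) (norm_nonneg _))
    have := hrb a ha
    have := abs_add_le (⟪g a, z⟫) (r a)
    gcongr
    linarith [abs_add_le (⟪g a, z⟫) (r a)]
  have hN : 0 < N := Npos hA hfin hpos hwm hwb
  have hρm : Measurable (gibbs 𝒜 γ g r z) := by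
    unfold gibbs; exact hwm.exp.div_const _
  have hρ0 : ∀ a, 0 ≤ gibbs 𝒜 γ g r z a := fun a =>
    div_nonneg (Real.exp_pos _).le hN.le
  have hρb : ∀ a ∈ 𝒜, |gibbs 𝒜 γ g r z a| ≤ Real.exp ((B * ‖z‖ + R) / γ) / N := by
    intro a ha
    rw [abs_of_nonneg (hρ0 a)]
    unfold gibbs
    rw [← hNdef]
    exact div_le_div_of_nonneg_right (Real.exp_le_exp.2 ((abs_le.1 (hwb a ha)).2)) hN.le
  have hρint : IntegrableOn (gibbs 𝒜 γ g r z) 𝒜 := bddInt hA hfin hρm hρb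
  have hρ1 : ∫ a in 𝒜, gibbs 𝒜 γ g r z a = 1 := by
    unfold gibbs
    rw [integral_div, ← hNdef, div_self hN.ne']
  have hcong : ∀ a,
      (⟪f a, Z⟫ + r a - γ * Real.log (gibbs 𝒜 γ g r z a)) * gibbs 𝒜 γ g r z a
      = (⟪f a, Z⟫ - ⟪g a, z⟫) * gibbs 𝒜 γ g r z a
        + (γ * Real.log N) * gibbs 𝒜 γ g r z a := by
    intro a
    have : Real.log (gibbs 𝒜 γ g r z a) = (⟪g a, z⟫ + r a) / γ - Real.log N := by
      unfold gibbs
      rw [← hNdef, Real.log_div (Real.exp_ne_zero _) hN.ne', Real.log_exp]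
    rw [this]
    field_simp
    ring
  have hint1 : IntegrableOn (fun a => (⟪f a, Z⟫ - ⟪g a, z⟫) * gibbs 𝒜 γ g r z a) 𝒜 := by
    refine bddInt hA hfin (((hfm.inner measurable_const).sub (hgm.inner measurable_const)).mul hρm)
      (K := (B * ‖Z‖ + B * ‖z‖) * (Real.exp ((B * ‖z‖ + R) / γ) / N)) (fun a ha => ?_)
    rw [abs_mul]
    refine mul_le_mul ?_ (hρb a ha) (abs_nonneg _) ?_
    swap
    · have := norm_nonneg Z; have := norm_nonneg z; nlinarith
    refine (abs_sub _ _).trans ?_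
    gcongr <;>
      exact (abs_real_inner_le_norm _ _).trans
        (mul_le_mul_of_nonneg_right (by first | exact hfb a ha | exact hgb a ha) (norm_nonneg _))
  have hint2 : IntegrableOn (fun a => (γ * Real.log N) * gibbs 𝒜 γ g r z a) 𝒜 :=
    hρint.const_mul _
  unfold gibbsG
  simp only [hcong]
  rw [integral_add hint1 hint2, integral_const_mul, hρ1, mul_one]

end helpers

section main
variable {m : ℕ} {𝒜 : Set (EuclideanSpace ℝ (Fin m))}

lemma bddIntMul (hA : MeasurableSet 𝒜) (hfin : volume 𝒜 < ⊤)
    {c p : EuclideanSpace ℝ (Fin m) → ℝ} (hc : Measurable c) (hp : Measurable p)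
    {Kc Kp : ℝ} (hKc : ∀ a ∈ 𝒜, |c a| ≤ Kc) (hKp : ∀ a ∈ 𝒜, |p a| ≤ Kp) :
    IntegrableOn (fun a => c a * p a) 𝒜 := by
  refine bddInt hA hfin (hc.mul hp) (K := Kc * Kp) fun a ha => ?_
  rw [abs_mul]
  exact mul_le_mul (hKc a ha) (hKp a ha) (abs_nonneg _) ((abs_nonneg _).trans (hKc a ha))

lemma abs_sub_le_aux {P Q e : ℝ} (hP : 0 ≤ P) (hQ : 0 ≤ Q) (he : 1 ≤ e)
    (h1 : Q ≤ e * P) (h2 : P ≤ e * Q) : |Q - P| ≤ (e - 1) * P := by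
  rw [abs_sub_le_iff]
  constructor
  · nlinarith
  · nlinarith [mul_nonneg hP (sq_nonneg (e - 1))]

lemma arithL {b c : ℝ} (hb : 0 < b) (hc : 0 < c) :
    3 ≤ 8 * (b + 1) ^ 2 * (c + 1) ∧ b ≤ 8 * (b + 1) ^ 2 * (c + 1) ∧
    3 * b ≤ 8 * (b + 1) ^ 2 * (c + 1) ∧ 4 * b ^ 2 * c ≤ 8 * (b + 1) ^ 2 * (c + 1) ∧
    4 * b * c ≤ 8 * (b + 1) ^ 2 * (c + 1) := by
  refine ⟨?_, ?_, ?_, ?_, ?_⟩ <;>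
    nlinarith [sq_nonneg b, mul_pos hb hc, mul_nonneg (mul_nonneg hb.le hb.le) hc.le,
      mul_pos (mul_pos hb hb) hc, sq_nonneg (b - 1), sq_nonneg (b + 1)]

lemma arith4bc {b c w : ℝ} (hb : 0 < b) (hc : 0 < c)
    (h : 8 * (b + 1) ^ 2 * (c + 1) / 2 < w) : 4 * b * c ≤ w := by
  nlinarith [mul_pos hb hc, mul_nonneg (mul_nonneg hb.le hb.le) hc.le,
    mul_pos (mul_pos hb hb) hc]

end main

set_option maxHeartbeats 1000000 in
/-- Perturbed Lipschitz property of `G`: the constant `L` depends only on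
`B`, `R` and `C`, and in particular not on `γ`, `f`, `g` or `r`. -/
theorem stmt9 (B R C : ℝ) (hB : 0 < B) (hR : 0 < R) (hC : 0 < C) :
    ∃ L > 0, ∀ (m d : ℕ) (𝒜 : Set (EuclideanSpace ℝ (Fin m))),
      IsCompact 𝒜 → 0 < volume 𝒜 → volume 𝒜 < ⊤ →
      ∀ γ : ℝ, 0 < γ →
      ∀ (f g : EuclideanSpace ℝ (Fin m) → EuclideanSpace ℝ (Fin d))
        (r : EuclideanSpace ℝ (Fin m) → ℝ),
        Measurable f → Measurable g → Measurable r →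
        (∀ a ∈ 𝒜, ‖f a‖ ≤ B) → (∀ a ∈ 𝒜, ‖g a‖ ≤ B) → (∀ a ∈ 𝒜, |r a| ≤ R) →
      ∀ z z' Z Z' : EuclideanSpace ℝ (Fin d), ‖z‖ ≤ C → ‖Z‖ ≤ C → ‖Z'‖ ≤ C →
        |gibbsG 𝒜 γ f g r z' Z' - gibbsG 𝒜 γ f f r z Z| ≤
          L * (1 + Real.exp (L / γ) + γ⁻¹ * Real.exp (L / γ)) * ‖z' - z‖ +
            L * ‖Z' - Z‖ +
            L * (1 + γ⁻¹ * Real.exp (L / γ)) *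
              sSup ((fun a => |⟪f a - g a, z'⟫|) '' 𝒜) := by
  refine ⟨8 * (B + 1) ^ 2 * (C + 1), by positivity, ?_⟩
  intro m d 𝒜 hcomp hpos hfin γ hγ f g r hfm hgm hrm hfb hgb hrb z z' Z Z' hz hZ hZ'
  set L : ℝ := 8 * (B + 1) ^ 2 * (C + 1) with hLdef
  have hLpos : 0 < L := by positivity
  have hA : MeasurableSet 𝒜 := hcomp.measurableSet
  obtain ⟨a₀, ha₀⟩ : 𝒜.Nonempty := by
    by_contra h
    rw [Set.not_nonempty_iff_eq_empty] at h
    simp [h] at hpos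
  set x := ‖z' - z‖ with hxdef
  set y := ‖Z' - Z‖ with hydef
  have hx0 : 0 ≤ x := norm_nonneg _
  have hy0 : 0 ≤ y := norm_nonneg _
  set EL := Real.exp (L / γ) with hELdef
  have hEL0 : 0 < EL := Real.exp_pos _
  set t := γ⁻¹ with htdef
  have ht0 : 0 < t := by positivity
  -- the sup
  set S := sSup ((fun a => |⟪f a - g a, z'⟫|) '' 𝒜) with hSdef
  have hbdd : BddAbove ((fun a => |⟪f a - g a, z'⟫|) '' 𝒜) := by
    refine ⟨2 * B * ‖z'‖, ?_⟩
    rintro xx ⟨a, ha, rfl⟩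
    refine (abs_real_inner_le_norm _ _).trans ?_
    have h1 : ‖f a - g a‖ ≤ 2 * B := (norm_sub_le _ _).trans (by linarith [hfb a ha, hgb a ha])
    exact mul_le_mul_of_nonneg_right h1 (norm_nonneg z')
  have hSb : ∀ a ∈ 𝒜, |⟪f a - g a, z'⟫| ≤ S := fun a ha => le_csSup hbdd ⟨a, ha, rfl⟩
  have hS0 : 0 ≤ S := le_trans (abs_nonneg _) (hSb a₀ ha₀)
  set W := S + B * x with hWdef
  have hW0 : 0 ≤ W := by rw [hWdef]; positivity
  set δ := W / γ with hδdef
  have hδ0 : 0 ≤ δ := by rw [hδdef]; positivity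
  clear_value L x y EL t S W δ
  -- weights and normalizations
  have hwfm : Measurable fun a => (⟪f a, z⟫ + r a) / γ :=
    ((hfm.inner measurable_const).add hrm).div_const γ
  have hwgm : Measurable fun a => (⟪g a, z'⟫ + r a) / γ :=
    ((hgm.inner measurable_const).add hrm).div_const γ
  have hinner : ∀ (h : EuclideanSpace ℝ (Fin m) → EuclideanSpace ℝ (Fin d)),
      (∀ a ∈ 𝒜, ‖h a‖ ≤ B) → ∀ (v : EuclideanSpace ℝ (Fin d)), ∀ a ∈ 𝒜, |⟪h a, v⟫| ≤ B * ‖v‖ :=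
    fun h hb v a ha => (abs_real_inner_le_norm _ _).trans
      (mul_le_mul_of_nonneg_right (hb a ha) (norm_nonneg _))
  have hwfb : ∀ a ∈ 𝒜, |(⟪f a, z⟫ + r a) / γ| ≤ (B * ‖z‖ + R) / γ := by
    intro a ha
    rw [abs_div, abs_of_pos hγ]
    have h1 := hinner f hfb z a ha
    have h2 := hrb a ha
    have h3 := abs_add_le (⟪f a, z⟫) (r a)
    gcongr
    linarith
  have hwgb : ∀ a ∈ 𝒜, |(⟪g a, z'⟫ + r a) / γ| ≤ (B * ‖z'‖ + R) / γ := by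
    intro a ha
    rw [abs_div, abs_of_pos hγ]
    have h1 := hinner g hgb z' a ha
    have h2 := hrb a ha
    have h3 := abs_add_le (⟪g a, z'⟫) (r a)
    gcongr
    linarith
  set Nf := ∫ a in 𝒜, Real.exp ((⟪f a, z⟫ + r a) / γ) with hNf
  set Ng := ∫ a in 𝒜, Real.exp ((⟪g a, z'⟫ + r a) / γ) with hNg
  have hNfpos : 0 < Nf := Npos hA hfin hpos hwfm hwfb
  have hNgpos : 0 < Ng := Npos hA hfin hpos hwgm hwgb
  clear_value Nf Ng
  have hexpf_int : IntegrableOn (fun a => Real.exp ((⟪f a, z⟫ + r a) / γ)) 𝒜 := by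
    refine bddInt hA hfin hwfm.exp (K := Real.exp ((B * ‖z‖ + R) / γ)) fun a ha => ?_
    rw [abs_of_pos (Real.exp_pos _)]
    exact Real.exp_le_exp.2 ((abs_le.1 (hwfb a ha)).2)
  have hexpg_int : IntegrableOn (fun a => Real.exp ((⟪g a, z'⟫ + r a) / γ)) 𝒜 := by
    refine bddInt hA hfin hwgm.exp (K := Real.exp ((B * ‖z'‖ + R) / γ)) fun a ha => ?_
    rw [abs_of_pos (Real.exp_pos _)]
    exact Real.exp_le_exp.2 ((abs_le.1 (hwgb a ha)).2)
  -- densities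
  have hπg : ∀ a, gibbs 𝒜 γ f r z a = Real.exp ((⟪f a, z⟫ + r a) / γ) / Nf := by
    intro a; unfold gibbs; rw [hNf]
  have hρg : ∀ a, gibbs 𝒜 γ g r z' a = Real.exp ((⟪g a, z'⟫ + r a) / γ) / Ng := by
    intro a; unfold gibbs; rw [hNg]
  have hπm : Measurable fun a => Real.exp ((⟪f a, z⟫ + r a) / γ) / Nf := hwfm.exp.div_const _
  have hρm : Measurable fun a => Real.exp ((⟪g a, z'⟫ + r a) / γ) / Ng := hwgm.exp.div_const _
  have hπ0 : ∀ a, 0 ≤ Real.exp ((⟪f a, z⟫ + r a) / γ) / Nf :=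
    fun a => div_nonneg (Real.exp_pos _).le hNfpos.le
  have hρ0 : ∀ a, 0 ≤ Real.exp ((⟪g a, z'⟫ + r a) / γ) / Ng :=
    fun a => div_nonneg (Real.exp_pos _).le hNgpos.le
  have hπb : ∀ a ∈ 𝒜, |Real.exp ((⟪f a, z⟫ + r a) / γ) / Nf|
      ≤ Real.exp ((B * ‖z‖ + R) / γ) / Nf := by
    intro a ha
    rw [abs_of_nonneg (hπ0 a)]
    exact div_le_div_of_nonneg_right (Real.exp_le_exp.2 ((abs_le.1 (hwfb a ha)).2)) hNfpos.le
  have hρb : ∀ a ∈ 𝒜, |Real.exp ((⟪g a, z'⟫ + r a) / γ) / Ng|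
      ≤ Real.exp ((B * ‖z'‖ + R) / γ) / Ng := by
    intro a ha
    rw [abs_of_nonneg (hρ0 a)]
    exact div_le_div_of_nonneg_right (Real.exp_le_exp.2 ((abs_le.1 (hwgb a ha)).2)) hNgpos.le
  have hπint : IntegrableOn (fun a => Real.exp ((⟪f a, z⟫ + r a) / γ) / Nf) 𝒜 :=
    bddInt hA hfin hπm hπb
  have hρint : IntegrableOn (fun a => Real.exp ((⟪g a, z'⟫ + r a) / γ) / Ng) 𝒜 :=
    bddInt hA hfin hρm hρb
  have hπ1 : ∫ a in 𝒜, Real.exp ((⟪f a, z⟫ + r a) / γ) / Nf = 1 := by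
    rw [integral_div, ← hNf, div_self hNfpos.ne']
  have hρ1 : ∫ a in 𝒜, Real.exp ((⟪g a, z'⟫ + r a) / γ) / Ng = 1 := by
    rw [integral_div, ← hNg, div_self hNgpos.ne']
  -- weight difference bound
  have hdiff : ∀ a ∈ 𝒜, |(⟪g a, z'⟫ + r a) / γ - (⟪f a, z⟫ + r a) / γ| ≤ δ := by
    intro a ha
    have h1 : (⟪g a, z'⟫ + r a) / γ - (⟪f a, z⟫ + r a) / γ
        = (-⟪f a - g a, z'⟫ + ⟪f a, z' - z⟫) / γ := by
      rw [div_sub_div_same]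
      congr 1
      simp only [inner_sub_left, inner_sub_right]
      ring
    rw [h1, hδdef, abs_div, abs_of_pos hγ]
    have h2 := hSb a ha
    have h3 := hinner f hfb (z' - z) a ha
    have h4 := abs_add_le (-⟪f a - g a, z'⟫) (⟪f a, z' - z⟫)
    rw [abs_neg] at h4
    gcongr
    rw [hWdef, hxdef]
    linarith
  -- normalization comparisons
  have hNgf : Ng ≤ Real.exp δ * Nf := by
    have h : ∫ a in 𝒜, Real.exp ((⟪g a, z'⟫ + r a) / γ)
        ≤ ∫ a in 𝒜, Real.exp δ * Real.exp ((⟪f a, z⟫ + r a) / γ) := by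
      refine setIntegral_mono_on hexpg_int (hexpf_int.const_mul _) hA fun a ha => ?_
      rw [← Real.exp_add]
      exact Real.exp_le_exp.2 (by linarith [(abs_le.1 (hdiff a ha)).2])
    rwa [integral_const_mul, ← hNf, ← hNg] at h
  have hNfg : Nf ≤ Real.exp δ * Ng := by
    have h : ∫ a in 𝒜, Real.exp ((⟪f a, z⟫ + r a) / γ)
        ≤ ∫ a in 𝒜, Real.exp δ * Real.exp ((⟪g a, z'⟫ + r a) / γ) := by
      refine setIntegral_mono_on hexpf_int (hexpg_int.const_mul _) hA fun a ha => ?_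
      rw [← Real.exp_add]
      exact Real.exp_le_exp.2 (by linarith [(abs_le.1 (hdiff a ha)).1])
    rwa [integral_const_mul, ← hNg, ← hNf] at h
  have he2 : Real.exp (2 * δ) = Real.exp δ * Real.exp δ := by
    rw [two_mul, Real.exp_add]
  have he21 : 1 ≤ Real.exp (2 * δ) := Real.one_le_exp (by linarith)
  -- pointwise density comparison
  have hρπ : ∀ a ∈ 𝒜, Real.exp ((⟪g a, z'⟫ + r a) / γ) / Ng
      ≤ Real.exp (2 * δ) * (Real.exp ((⟪f a, z⟫ + r a) / γ) / Nf) := by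
    intro a ha
    rw [mul_div_assoc', div_le_div_iff₀ hNgpos hNfpos]
    have h1 : Real.exp ((⟪g a, z'⟫ + r a) / γ)
        ≤ Real.exp δ * Real.exp ((⟪f a, z⟫ + r a) / γ) := by
      rw [← Real.exp_add]
      exact Real.exp_le_exp.2 (by linarith [(abs_le.1 (hdiff a ha)).2])
    calc Real.exp ((⟪g a, z'⟫ + r a) / γ) * Nf
        ≤ (Real.exp δ * Real.exp ((⟪f a, z⟫ + r a) / γ)) * (Real.exp δ * Ng) :=
          mul_le_mul h1 hNfg hNfpos.le (by positivity)
      _ = Real.exp (2 * δ) * Real.exp ((⟪f a, z⟫ + r a) / γ) * Ng := by rw [he2]; ring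
  have hπρ : ∀ a ∈ 𝒜, Real.exp ((⟪f a, z⟫ + r a) / γ) / Nf
      ≤ Real.exp (2 * δ) * (Real.exp ((⟪g a, z'⟫ + r a) / γ) / Ng) := by
    intro a ha
    rw [mul_div_assoc', div_le_div_iff₀ hNfpos hNgpos]
    have h1 : Real.exp ((⟪f a, z⟫ + r a) / γ)
        ≤ Real.exp δ * Real.exp ((⟪g a, z'⟫ + r a) / γ) := by
      rw [← Real.exp_add]
      exact Real.exp_le_exp.2 (by linarith [(abs_le.1 (hdiff a ha)).1])
    calc Real.exp ((⟪f a, z⟫ + r a) / γ) * Ng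
        ≤ (Real.exp δ * Real.exp ((⟪g a, z'⟫ + r a) / γ)) * (Real.exp δ * Nf) :=
          mul_le_mul h1 hNgf hNgpos.le (by positivity)
      _ = Real.exp (2 * δ) * Real.exp ((⟪g a, z'⟫ + r a) / γ) * Nf := by rw [he2]; ring
  have habsρπ : ∀ a ∈ 𝒜,
      |Real.exp ((⟪g a, z'⟫ + r a) / γ) / Ng - Real.exp ((⟪f a, z⟫ + r a) / γ) / Nf|
        ≤ (Real.exp (2 * δ) - 1) * (Real.exp ((⟪f a, z⟫ + r a) / γ) / Nf) := by
    intro a ha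
    exact abs_sub_le_aux (hπ0 a) (hρ0 a) he21 (hρπ a ha) (hπρ a ha)
  -- bounds for the inner products
  have hc1m : Measurable fun a => ⟪f a, Z'⟫ - ⟪g a, z'⟫ :=
    (hfm.inner measurable_const).sub (hgm.inner measurable_const)
  have hc1b : ∀ a ∈ 𝒜, |⟪f a, Z'⟫ - ⟪g a, z'⟫| ≤ B * ‖Z'‖ + B * ‖z'‖ := fun a ha =>
    (abs_sub _ _).trans (add_le_add (hinner f hfb Z' a ha) (hinner g hgb z' a ha))
  have hc2m : Measurable fun a => ⟪f a, Z⟫ - ⟪f a, z⟫ :=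
    (hfm.inner measurable_const).sub (hfm.inner measurable_const)
  have hc2b : ∀ a ∈ 𝒜, |⟪f a, Z⟫ - ⟪f a, z⟫| ≤ B * ‖Z‖ + B * ‖z‖ := fun a ha =>
    (abs_sub _ _).trans (add_le_add (hinner f hfb Z a ha) (hinner f hfb z a ha))
  have he1m : Measurable fun a => ⟪f a - g a, z'⟫ :=
    (hfm.sub hgm).inner measurable_const
  have he2m : Measurable fun a => ⟪f a, Z' - Z - (z' - z)⟫ := hfm.inner measurable_const
  have he2b : ∀ a ∈ 𝒜, |⟪f a, Z' - Z - (z' - z)⟫| ≤ B * (y + x) := by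
    intro a ha
    refine (hinner f hfb _ a ha).trans ?_
    have h := norm_sub_le (Z' - Z) (z' - z)
    exact mul_le_mul_of_nonneg_left (by rw [hxdef, hydef]; linarith only [h]) hB.le
  have he3m : Measurable fun a => ⟪f a, Z - z⟫ := hfm.inner measurable_const
  have he3b : ∀ a ∈ 𝒜, |⟪f a, Z - z⟫| ≤ 2 * B * C := by
    intro a ha
    refine (hinner f hfb _ a ha).trans ?_
    have h := norm_sub_le Z z
    calc B * ‖Z - z‖ ≤ B * (2 * C) :=
          mul_le_mul_of_nonneg_left (by linarith only [h, hZ, hz]) hB.le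
      _ = 2 * B * C := by ring
  have hρπm : Measurable fun a =>
      Real.exp ((⟪g a, z'⟫ + r a) / γ) / Ng - Real.exp ((⟪f a, z⟫ + r a) / γ) / Nf :=
    hρm.sub hπm
  have hρπb : ∀ a ∈ 𝒜,
      |Real.exp ((⟪g a, z'⟫ + r a) / γ) / Ng - Real.exp ((⟪f a, z⟫ + r a) / γ) / Nf|
        ≤ Real.exp ((B * ‖z'‖ + R) / γ) / Ng + Real.exp ((B * ‖z‖ + R) / γ) / Nf := fun a ha =>
    (abs_sub _ _).trans (add_le_add (hρb a ha) (hπb a ha))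
  -- integrability of the pieces
  have hi1 : IntegrableOn
      (fun a => ⟪f a - g a, z'⟫ * (Real.exp ((⟪g a, z'⟫ + r a) / γ) / Ng)) 𝒜 :=
    bddIntMul hA hfin he1m hρm hSb hρb
  have hi2 : IntegrableOn
      (fun a => ⟪f a, Z' - Z - (z' - z)⟫ * (Real.exp ((⟪g a, z'⟫ + r a) / γ) / Ng)) 𝒜 :=
    bddIntMul hA hfin he2m hρm he2b hρb
  have hi3 : IntegrableOn
      (fun a => ⟪f a, Z - z⟫ *
        (Real.exp ((⟪g a, z'⟫ + r a) / γ) / Ng - Real.exp ((⟪f a, z⟫ + r a) / γ) / Nf)) 𝒜 :=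
    bddIntMul hA hfin he3m hρπm he3b hρπb
  have hiρ : IntegrableOn
      (fun a => (⟪f a, Z'⟫ - ⟪g a, z'⟫) * (Real.exp ((⟪g a, z'⟫ + r a) / γ) / Ng)) 𝒜 :=
    bddIntMul hA hfin hc1m hρm hc1b hρb
  have hiπ : IntegrableOn
      (fun a => (⟪f a, Z⟫ - ⟪f a, z⟫) * (Real.exp ((⟪f a, z⟫ + r a) / γ) / Nf)) 𝒜 :=
    bddIntMul hA hfin hc2m hπm hc2b hπb
  -- the structural identity
  have hG1 := gibbsG_eq (f := f) (g := g) hA hfin hpos hγ hfm hgm hrm hB.le hfb hgb hrb z' Z'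
  have hG2 := gibbsG_eq (f := f) (g := f) hA hfin hpos hγ hfm hfm hrm hB.le hfb hfb hrb z Z
  rw [← hNg] at hG1
  rw [← hNf] at hG2
  simp only [hρg] at hG1
  simp only [hπg] at hG2
  have hdecomp : gibbsG 𝒜 γ f g r z' Z' - gibbsG 𝒜 γ f f r z Z
      = (∫ a in 𝒜, ⟪f a - g a, z'⟫ * (Real.exp ((⟪g a, z'⟫ + r a) / γ) / Ng))
        + (∫ a in 𝒜, ⟪f a, Z' - Z - (z' - z)⟫ * (Real.exp ((⟪g a, z'⟫ + r a) / γ) / Ng))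
        + (∫ a in 𝒜, ⟪f a, Z - z⟫ *
            (Real.exp ((⟪g a, z'⟫ + r a) / γ) / Ng - Real.exp ((⟪f a, z⟫ + r a) / γ) / Nf))
        + γ * (Real.log Ng - Real.log Nf) := by
    rw [hG1, hG2]
    have hsplit :
        (∫ a in 𝒜, ⟪f a - g a, z'⟫ * (Real.exp ((⟪g a, z'⟫ + r a) / γ) / Ng))
        + (∫ a in 𝒜, ⟪f a, Z' - Z - (z' - z)⟫ * (Real.exp ((⟪g a, z'⟫ + r a) / γ) / Ng))
        + (∫ a in 𝒜, ⟪f a, Z - z⟫ *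
            (Real.exp ((⟪g a, z'⟫ + r a) / γ) / Ng - Real.exp ((⟪f a, z⟫ + r a) / γ) / Nf))
        = (∫ a in 𝒜, (⟪f a, Z'⟫ - ⟪g a, z'⟫) * (Real.exp ((⟪g a, z'⟫ + r a) / γ) / Ng))
          - (∫ a in 𝒜, (⟪f a, Z⟫ - ⟪f a, z⟫) * (Real.exp ((⟪f a, z⟫ + r a) / γ) / Nf)) := by
      have key : ∫ a in 𝒜,
          (⟪f a - g a, z'⟫ * (Real.exp ((⟪g a, z'⟫ + r a) / γ) / Ng)
            + ⟪f a, Z' - Z - (z' - z)⟫ * (Real.exp ((⟪g a, z'⟫ + r a) / γ) / Ng)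
            + ⟪f a, Z - z⟫ *
              (Real.exp ((⟪g a, z'⟫ + r a) / γ) / Ng - Real.exp ((⟪f a, z⟫ + r a) / γ) / Nf))
          = ∫ a in 𝒜,
          ((⟪f a, Z'⟫ - ⟪g a, z'⟫) * (Real.exp ((⟪g a, z'⟫ + r a) / γ) / Ng)
            - (⟪f a, Z⟫ - ⟪f a, z⟫) * (Real.exp ((⟪f a, z⟫ + r a) / γ) / Nf)) := by
        refine integral_congr_ae (Filter.Eventually.of_forall fun a => ?_)
        simp only [inner_sub_left, inner_sub_right]
        ring
      have k2 := integral_add (hi1.add hi2) hi3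
      have k2' := integral_add hi1 hi2
      have k3 := integral_sub hiρ hiπ
      simp only [Pi.add_apply] at k2
      rw [k2'] at k2
      rw [key, k3] at k2
      linarith only [k2]
    linarith only [hsplit]
  -- bounds on the pieces
  have hE1b : |∫ a in 𝒜, ⟪f a - g a, z'⟫ * (Real.exp ((⟪g a, z'⟫ + r a) / γ) / Ng)| ≤ S :=
    abs_int_density_le hA hfin hρm hρ0 hρb hρ1 he1m hSb
  have hE2b : |∫ a in 𝒜, ⟪f a, Z' - Z - (z' - z)⟫ * (Real.exp ((⟪g a, z'⟫ + r a) / γ) / Ng)|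
      ≤ B * (y + x) :=
    abs_int_density_le hA hfin hρm hρ0 hρb hρ1 he2m he2b
  -- E3 bounds
  have hE3abs : ∀ a ∈ 𝒜,
      |⟪f a, Z - z⟫| * |Real.exp ((⟪g a, z'⟫ + r a) / γ) / Ng
        - Real.exp ((⟪f a, z⟫ + r a) / γ) / Nf|
      ≤ (2 * B * C * (Real.exp (2 * δ) - 1)) * (Real.exp ((⟪f a, z⟫ + r a) / γ) / Nf) := by
    intro a ha
    have := mul_le_mul (he3b a ha) (habsρπ a ha) (abs_nonneg _) (by positivity)
    calc |⟪f a, Z - z⟫| * |_ - _| ≤ (2 * B * C) * ((Real.exp (2 * δ) - 1) *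
          (Real.exp ((⟪f a, z⟫ + r a) / γ) / Nf)) := this
      _ = (2 * B * C * (Real.exp (2 * δ) - 1)) * (Real.exp ((⟪f a, z⟫ + r a) / γ) / Nf) := by
          ring
  have hE3a : |∫ a in 𝒜, ⟪f a, Z - z⟫ *
      (Real.exp ((⟪g a, z'⟫ + r a) / γ) / Ng - Real.exp ((⟪f a, z⟫ + r a) / γ) / Nf)|
      ≤ 2 * B * C * (Real.exp (2 * δ) - 1) := by
    calc |∫ a in 𝒜, ⟪f a, Z - z⟫ *
        (Real.exp ((⟪g a, z'⟫ + r a) / γ) / Ng - Real.exp ((⟪f a, z⟫ + r a) / γ) / Nf)|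
        ≤ ∫ a in 𝒜, |⟪f a, Z - z⟫| * |Real.exp ((⟪g a, z'⟫ + r a) / γ) / Ng
            - Real.exp ((⟪f a, z⟫ + r a) / γ) / Nf| := by
          simpa [Real.norm_eq_abs, abs_mul] using
            norm_integral_le_integral_norm (μ := volume.restrict 𝒜)
              (fun a => ⟪f a, Z - z⟫ *
                (Real.exp ((⟪g a, z'⟫ + r a) / γ) / Ng - Real.exp ((⟪f a, z⟫ + r a) / γ) / Nf))
      _ ≤ ∫ a in 𝒜, (2 * B * C * (Real.exp (2 * δ) - 1)) *
            (Real.exp ((⟪f a, z⟫ + r a) / γ) / Nf) := by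
          refine setIntegral_mono_on ?_ (hπint.const_mul _) hA hE3abs
          · simpa [abs_mul, IntegrableOn] using hi3.abs
      _ = 2 * B * C * (Real.exp (2 * δ) - 1) := by
          rw [integral_const_mul, hπ1, mul_one]
  have hE3b' : |∫ a in 𝒜, ⟪f a, Z - z⟫ *
      (Real.exp ((⟪g a, z'⟫ + r a) / γ) / Ng - Real.exp ((⟪f a, z⟫ + r a) / γ) / Nf)|
      ≤ 4 * B * C := by
    calc |∫ a in 𝒜, ⟪f a, Z - z⟫ *
        (Real.exp ((⟪g a, z'⟫ + r a) / γ) / Ng - Real.exp ((⟪f a, z⟫ + r a) / γ) / Nf)|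
        ≤ ∫ a in 𝒜, |⟪f a, Z - z⟫| * |Real.exp ((⟪g a, z'⟫ + r a) / γ) / Ng
            - Real.exp ((⟪f a, z⟫ + r a) / γ) / Nf| := by
          simpa [Real.norm_eq_abs, abs_mul] using
            norm_integral_le_integral_norm (μ := volume.restrict 𝒜)
              (fun a => ⟪f a, Z - z⟫ *
                (Real.exp ((⟪g a, z'⟫ + r a) / γ) / Ng - Real.exp ((⟪f a, z⟫ + r a) / γ) / Nf))
      _ ≤ ∫ a in 𝒜, (2 * B * C) * (Real.exp ((⟪g a, z'⟫ + r a) / γ) / Ng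
            + Real.exp ((⟪f a, z⟫ + r a) / γ) / Nf) := by
          refine setIntegral_mono_on ?_ ((hρint.add hπint).const_mul _) hA ?_
          · simpa [abs_mul, IntegrableOn] using hi3.abs
          · intro a ha
            have h1 : |Real.exp ((⟪g a, z'⟫ + r a) / γ) / Ng
                - Real.exp ((⟪f a, z⟫ + r a) / γ) / Nf|
                ≤ Real.exp ((⟪g a, z'⟫ + r a) / γ) / Ng
                  + Real.exp ((⟪f a, z⟫ + r a) / γ) / Nf := by
              have := hρ0 a; have := hπ0 a
              rw [abs_sub_le_iff]; constructor <;> linarith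
            exact mul_le_mul (he3b a ha) h1 (abs_nonneg _) (by positivity)
      _ = 4 * B * C := by
          rw [integral_const_mul, integral_add hρint hπint, hρ1, hπ1]
          ring
  -- log bound
  have hlog : |Real.log Ng - Real.log Nf| ≤ δ := by
    rw [abs_sub_le_iff]
    constructor
    · have h := Real.log_le_log hNgpos hNgf
      rw [Real.log_mul (Real.exp_ne_zero _) hNfpos.ne', Real.log_exp] at h
      linarith
    · have h := Real.log_le_log hNfpos hNfg
      rw [Real.log_mul (Real.exp_ne_zero _) hNgpos.ne', Real.log_exp] at h
      linarith
  have hE4b : |γ * (Real.log Ng - Real.log Nf)| ≤ W := by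
    rw [abs_mul, abs_of_pos hγ]
    calc γ * |Real.log Ng - Real.log Nf| ≤ γ * δ := mul_le_mul_of_nonneg_left hlog hγ.le
      _ = W := by rw [hδdef]; field_simp
  -- unified E3 bound
  have hE3 : |∫ a in 𝒜, ⟪f a, Z - z⟫ *
      (Real.exp ((⟪g a, z'⟫ + r a) / γ) / Ng - Real.exp ((⟪f a, z⟫ + r a) / γ) / Nf)|
      ≤ W + 4 * B * C * (t * EL) * W := by
    rcases le_or_gt W (L / 2) with h | h
    · have h2W : 2 * W ≤ L := by linarith
      have h2δ : 2 * δ ≤ L / γ := by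
        calc 2 * δ = (2 * W) / γ := by rw [hδdef]; ring
          _ ≤ L / γ := by gcongr
      have hexp2δ : Real.exp (2 * δ) ≤ EL := by
        rw [hELdef]; exact Real.exp_le_exp.2 h2δ
      have hexp1 : Real.exp (2 * δ) - 1 ≤ (2 * δ) * Real.exp (2 * δ) := by
        have h2 : 1 - 2 * δ ≤ Real.exp (-(2 * δ)) := by
          linarith [Real.add_one_le_exp (-(2 * δ))]
        have h3 : (1 - 2 * δ) * Real.exp (2 * δ) ≤ Real.exp (-(2 * δ)) * Real.exp (2 * δ) :=
          mul_le_mul_of_nonneg_right h2 (Real.exp_pos _).le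
        rw [← Real.exp_add, neg_add_cancel, Real.exp_zero] at h3
        nlinarith only [h3]
      have step1 : Real.exp (2 * δ) - 1 ≤ 2 * δ * EL := by
        have := mul_le_mul_of_nonneg_left hexp2δ (by linarith : (0:ℝ) ≤ 2 * δ)
        linarith only [hexp1, this]
      have hδt : δ = t * W := by rw [hδdef, htdef]; ring
      have hcalc : 2 * B * C * (Real.exp (2 * δ) - 1) ≤ 4 * B * C * (t * EL) * W := by
        calc 2 * B * C * (Real.exp (2 * δ) - 1) ≤ 2 * B * C * (2 * δ * EL) :=
              mul_le_mul_of_nonneg_left step1 (by positivity)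
          _ = 4 * B * C * (t * EL) * W := by rw [hδt]; ring
      linarith only [hE3a, hW0, hcalc]
    · have h4 : 4 * B * C ≤ W := arith4bc hB hC (by rw [hLdef] at h; exact h)
      have hrest : 0 ≤ 4 * B * C * (t * EL) * W :=
        mul_nonneg (mul_nonneg (by positivity) (mul_nonneg ht0.le hEL0.le)) hW0
      linarith only [hE3b', h4, hrest]
  -- final assembly
  have hsum : |gibbsG 𝒜 γ f g r z' Z' - gibbsG 𝒜 γ f f r z Z|
      ≤ S + B * (y + x) + (W + 4 * B * C * (t * EL) * W) + W := by
    rw [hdecomp]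
    have a1 := abs_add_le
      ((∫ a in 𝒜, ⟪f a - g a, z'⟫ * (Real.exp ((⟪g a, z'⟫ + r a) / γ) / Ng))
        + (∫ a in 𝒜, ⟪f a, Z' - Z - (z' - z)⟫ * (Real.exp ((⟪g a, z'⟫ + r a) / γ) / Ng))
        + (∫ a in 𝒜, ⟪f a, Z - z⟫ *
            (Real.exp ((⟪g a, z'⟫ + r a) / γ) / Ng - Real.exp ((⟪f a, z⟫ + r a) / γ) / Nf)))
      (γ * (Real.log Ng - Real.log Nf))
    have a2 := abs_add_le
      ((∫ a in 𝒜, ⟪f a - g a, z'⟫ * (Real.exp ((⟪g a, z'⟫ + r a) / γ) / Ng))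
        + (∫ a in 𝒜, ⟪f a, Z' - Z - (z' - z)⟫ * (Real.exp ((⟪g a, z'⟫ + r a) / γ) / Ng)))
      (∫ a in 𝒜, ⟪f a, Z - z⟫ *
            (Real.exp ((⟪g a, z'⟫ + r a) / γ) / Ng - Real.exp ((⟪f a, z⟫ + r a) / γ) / Nf))
    have a3 := abs_add_le
      (∫ a in 𝒜, ⟪f a - g a, z'⟫ * (Real.exp ((⟪g a, z'⟫ + r a) / γ) / Ng))
      (∫ a in 𝒜, ⟪f a, Z' - Z - (z' - z)⟫ * (Real.exp ((⟪g a, z'⟫ + r a) / γ) / Ng))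
    linarith only [a1, a2, a3, hE1b, hE2b, hE3, hE4b]
  rw [hWdef] at hsum
  obtain ⟨c1, c2, c3, c4, c5⟩ := arithL hB hC
  rw [← hLdef] at c1 c2 c3 c4 c5
  have p1 : 0 ≤ (L - 3) * S := mul_nonneg (by linarith) hS0
  have p2 : 0 ≤ (L - B) * y := mul_nonneg (by linarith) hy0
  have p3 : 0 ≤ (L - 3 * B) * x := mul_nonneg (by linarith) hx0
  have p4 : 0 ≤ L * (EL * x) := mul_nonneg hLpos.le (mul_nonneg hEL0.le hx0)
  have p5 : 0 ≤ (L - 4 * B ^ 2 * C) * (t * (EL * x)) :=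
    mul_nonneg (by linarith) (mul_nonneg ht0.le (mul_nonneg hEL0.le hx0))
  have p6 : 0 ≤ (L - 4 * B * C) * (t * (EL * S)) :=
    mul_nonneg (by linarith) (mul_nonneg ht0.le (mul_nonneg hEL0.le hS0))
  linarith only [hsum, p1, p2, p3, p4, p5, p6, hS0, hx0, hy0]
end

section
/- For all z', Z' ∈ ℝ^d with |z'| ≤ C and |Z'| ≤ C: |G_g(z', Z') − G(z', Z')| ≤ 2(1 + (2(BC + R)/γ) · exp(2(BC + R)/γ)) · sup_{a∈𝒜} |(f(a) − g(a))·z'|. -/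
open MeasureTheory
open scoped RealInnerProductSpace

/-- helper: `|e^x - 1| ≤ e^c - 1` when `|x| ≤ c`. -/
lemma exp_sub_one_abs_le {x c : ℝ} (h : |x| ≤ c) : |Real.exp x - 1| ≤ Real.exp c - 1 := by
  obtain ⟨h1, h2⟩ := abs_le.1 h
  rw [abs_le]
  constructor
  · have hle : Real.exp (-c) ≤ Real.exp x := Real.exp_le_exp.2 (by linarith)
    have hneg : Real.exp (-c) = (Real.exp c)⁻¹ := Real.exp_neg c
    have hpos : 0 < Real.exp c := Real.exp_pos c
    have hinv : (Real.exp c)⁻¹ * Real.exp c = 1 := inv_mul_cancel₀ hpos.ne'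
    nlinarith [sq_nonneg (Real.exp c - 1)]
  · have := Real.exp_le_exp.2 h2
    linarith

/-- helper: `e^x - 1 ≤ x e^x` for `x ≥ 0`. -/
lemma exp_sub_one_le_mul {x : ℝ} (hx : 0 ≤ x) : Real.exp x - 1 ≤ x * Real.exp x := by
  have h := Real.add_one_le_exp (-x)
  rw [Real.exp_neg] at h
  have hpos : 0 < Real.exp x := Real.exp_pos x
  have h2 : (1 - x) * Real.exp x ≤ 1 := by
    calc (1 - x) * Real.exp x = (-x + 1) * Real.exp x := by ring
    _ ≤ (Real.exp x)⁻¹ * Real.exp x := mul_le_mul_of_nonneg_right h hpos.le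
    _ = 1 := inv_mul_cancel₀ hpos.ne'
  nlinarith

set_option maxHeartbeats 1000000 in
/-- Closed form for `gibbsG`. -/
lemma gibbsG_eq_s12 {m d : ℕ} (𝒜 : Set (EuclideanSpace ℝ (Fin m))) (γ : ℝ) (hγ : γ ≠ 0)
    (f φ : EuclideanSpace ℝ (Fin m) → EuclideanSpace ℝ (Fin d))
    (r : EuclideanSpace ℝ (Fin m) → ℝ) (z' Z' : EuclideanSpace ℝ (Fin d))
    (hI : 0 < ∫ a in 𝒜, Real.exp ((⟪φ a, z'⟫ + r a) / γ))
    (h1 : IntegrableOn (fun a => (⟪f a, Z'⟫ - ⟪φ a, z'⟫) * Real.exp ((⟪φ a, z'⟫ + r a) / γ)) 𝒜)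
    (h2 : IntegrableOn (fun a => Real.exp ((⟪φ a, z'⟫ + r a) / γ)) 𝒜) :
    gibbsG 𝒜 γ f φ r z' Z' =
      (∫ a in 𝒜, (⟪f a, Z'⟫ - ⟪φ a, z'⟫) * Real.exp ((⟪φ a, z'⟫ + r a) / γ)) /
          (∫ a in 𝒜, Real.exp ((⟪φ a, z'⟫ + r a) / γ)) +
        γ * Real.log (∫ a in 𝒜, Real.exp ((⟪φ a, z'⟫ + r a) / γ)) := by
  set I := ∫ a in 𝒜, Real.exp ((⟪φ a, z'⟫ + r a) / γ) with hIdef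
  have key : ∀ a, (⟪f a, Z'⟫ + r a - γ * Real.log (gibbs 𝒜 γ φ r z' a)) * gibbs 𝒜 γ φ r z' a
      = (⟪f a, Z'⟫ - ⟪φ a, z'⟫) * Real.exp ((⟪φ a, z'⟫ + r a) / γ) / I
        + (γ * Real.log I) * (Real.exp ((⟪φ a, z'⟫ + r a) / γ) / I) := by
    intro a
    have hglog : Real.log (gibbs 𝒜 γ φ r z' a) = (⟪φ a, z'⟫ + r a) / γ - Real.log I := by
      rw [gibbs, ← hIdef, Real.log_div (Real.exp_ne_zero _) hI.ne', Real.log_exp]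
    rw [hglog, gibbs, ← hIdef]
    field_simp
    ring
  unfold gibbsG
  simp_rw [key]
  rw [integral_add (h1.div_const I) ((h2.div_const I).const_mul _)]
  rw [integral_div, integral_const_mul, integral_div, ← hIdef, div_self hI.ne', mul_one]

set_option maxHeartbeats 2000000 in
theorem stmt12 {m d : ℕ}
    (𝒜 : Set (EuclideanSpace ℝ (Fin m)))
    (h𝒜 : IsCompact 𝒜) (h𝒜0 : 0 < volume 𝒜) (h𝒜fin : volume 𝒜 < ⊤)
    (γ C B R : ℝ) (hγ : 0 < γ) (hC : 0 < C) (hB : 0 < B) (hR : 0 < R)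
    (f g : EuclideanSpace ℝ (Fin m) → EuclideanSpace ℝ (Fin d))
    (r : EuclideanSpace ℝ (Fin m) → ℝ)
    (hf : Measurable f) (hg : Measurable g) (hr : Measurable r)
    (hfB : ∀ a ∈ 𝒜, ‖f a‖ ≤ B) (hgB : ∀ a ∈ 𝒜, ‖g a‖ ≤ B)
    (hrR : ∀ a ∈ 𝒜, |r a| ≤ R)
    (z' Z' : EuclideanSpace ℝ (Fin d)) (hz' : ‖z'‖ ≤ C) (hZ' : ‖Z'‖ ≤ C) :
    |gibbsG 𝒜 γ f g r z' Z' - gibbsG 𝒜 γ f f r z' Z'| ≤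
      2 * (1 + 2 * (B * C + R) / γ * Real.exp (2 * (B * C + R) / γ)) *
        sSup ((fun a => |⟪f a - g a, z'⟫|) '' 𝒜) := by
  have hAm : MeasurableSet 𝒜 := h𝒜.measurableSet
  have hvol_ne : volume 𝒜 ≠ ⊤ := h𝒜fin.ne
  have h𝒜ne : 𝒜.Nonempty := by
    rcases Set.eq_empty_or_nonempty 𝒜 with h | h
    · rw [h] at h𝒜0; simp at h𝒜0
    · exact h
  set ε := sSup ((fun a => |⟪f a - g a, z'⟫|) '' 𝒜) with hεdef
  set hF : EuclideanSpace ℝ (Fin m) → ℝ := fun a => Real.exp ((⟪f a, z'⟫ + r a) / γ)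
    with hFdef
  set hG : EuclideanSpace ℝ (Fin m) → ℝ := fun a => Real.exp ((⟪g a, z'⟫ + r a) / γ)
    with hGdef
  set w : EuclideanSpace ℝ (Fin m) → ℝ := fun a => ⟪f a, Z'⟫ - ⟪f a, z'⟫ with hwdef
  set δ : EuclideanSpace ℝ (Fin m) → ℝ := fun a => ⟪f a, z'⟫ - ⟪g a, z'⟫ with hδdef
  -- pointwise bounds
  have hinner : ∀ (φ : EuclideanSpace ℝ (Fin m) → EuclideanSpace ℝ (Fin d))
      (u : EuclideanSpace ℝ (Fin d)), (∀ a ∈ 𝒜, ‖φ a‖ ≤ B) → ‖u‖ ≤ C →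
      ∀ a ∈ 𝒜, |⟪φ a, u⟫| ≤ B * C := by
    intro φ u hφB hu a ha
    calc |⟪φ a, u⟫| ≤ ‖φ a‖ * ‖u‖ := abs_real_inner_le_norm _ _
      _ ≤ B * C := mul_le_mul (hφB a ha) hu (norm_nonneg _) hB.le
  have hδbd : ∀ a ∈ 𝒜, |δ a| ≤ 2 * (B * C) := by
    intro a ha
    have h1 := hinner f z' hfB hz' a ha
    have h2 := hinner g z' hgB hz' a ha
    calc |δ a| ≤ |⟪f a, z'⟫| + |⟪g a, z'⟫| := abs_sub _ _
      _ ≤ 2 * (B * C) := by linarith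
  have hδeq : ∀ a, |⟪f a - g a, z'⟫| = |δ a| := by
    intro a; rw [hδdef]; simp [inner_sub_left]
  have hbdd : BddAbove ((fun a => |⟪f a - g a, z'⟫|) '' 𝒜) := by
    refine ⟨2 * (B * C), ?_⟩
    rintro y ⟨a, ha, rfl⟩
    show |⟪f a - g a, z'⟫| ≤ 2 * (B * C)
    rw [hδeq a]; exact hδbd a ha
  have hδε : ∀ a ∈ 𝒜, |δ a| ≤ ε := by
    intro a ha
    rw [← hδeq a]
    exact le_csSup hbdd ⟨a, ha, rfl⟩
  have hεnn : 0 ≤ ε := by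
    obtain ⟨a, ha⟩ := h𝒜ne
    exact (abs_nonneg _).trans (hδε a ha)
  have hεle : ε ≤ 2 * (B * C) := by
    rw [hεdef]
    refine csSup_le (h𝒜ne.image _) ?_
    rintro y ⟨a, ha, rfl⟩
    show |⟪f a - g a, z'⟫| ≤ 2 * (B * C)
    rw [hδeq a]; exact hδbd a ha
  have hwbd : ∀ a ∈ 𝒜, |w a| ≤ 2 * (B * C) := by
    intro a ha
    have h1 := hinner f Z' hfB hZ' a ha
    have h2 := hinner f z' hfB hz' a ha
    calc |w a| ≤ |⟪f a, Z'⟫| + |⟪f a, z'⟫| := abs_sub _ _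
      _ ≤ 2 * (B * C) := by linarith
  -- bounds on exponentials
  set M : ℝ := (B * C + R) / γ with hMdef
  have hvbd : ∀ (φ : EuclideanSpace ℝ (Fin m) → EuclideanSpace ℝ (Fin d)),
      (∀ a ∈ 𝒜, ‖φ a‖ ≤ B) → ∀ a ∈ 𝒜, |(⟪φ a, z'⟫ + r a) / γ| ≤ M := by
    intro φ hφB a ha
    rw [hMdef, abs_div, abs_of_pos hγ, div_le_div_iff_of_pos_right hγ]
    calc |⟪φ a, z'⟫ + r a| ≤ |⟪φ a, z'⟫| + |r a| := abs_add_le _ _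
      _ ≤ B * C + R := add_le_add (hinner φ z' hφB hz' a ha) (hrR a ha)
  have hFub : ∀ a ∈ 𝒜, hF a ≤ Real.exp M := fun a ha =>
    Real.exp_le_exp.2 ((le_abs_self _).trans (hvbd f hfB a ha))
  have hGub : ∀ a ∈ 𝒜, hG a ≤ Real.exp M := fun a ha =>
    Real.exp_le_exp.2 ((le_abs_self _).trans (hvbd g hgB a ha))
  have hFlb : ∀ a ∈ 𝒜, Real.exp (-M) ≤ hF a := fun a ha =>
    Real.exp_le_exp.2 (neg_le_of_abs_le (hvbd f hfB a ha))
  have hGlb : ∀ a ∈ 𝒜, Real.exp (-M) ≤ hG a := fun a ha =>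
    Real.exp_le_exp.2 (neg_le_of_abs_le (hvbd g hgB a ha))
  -- measurability
  have hwm : Measurable w := (hf.inner measurable_const).sub (hf.inner measurable_const)
  have hδm : Measurable δ := (hf.inner measurable_const).sub (hg.inner measurable_const)
  have hFm : Measurable hF := (((hf.inner measurable_const).add hr).div_const γ).exp
  have hGm : Measurable hG := (((hg.inner measurable_const).add hr).div_const γ).exp
  -- integrability
  have integOn : ∀ (F : EuclideanSpace ℝ (Fin m) → ℝ) (K : ℝ), Measurable F →
      (∀ a ∈ 𝒜, |F a| ≤ K) → IntegrableOn F 𝒜 := by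
    intro F K hFm' hFb
    exact Measure.integrableOn_of_bounded hvol_ne hFm'.aestronglyMeasurable
      ((ae_restrict_iff' hAm).2 (ae_of_all _ (fun a ha => by
        simpa [Real.norm_eq_abs] using hFb a ha)))
  have habsF : ∀ a, |hF a| = hF a := fun a => abs_of_pos (Real.exp_pos _)
  have habsG : ∀ a, |hG a| = hG a := fun a => abs_of_pos (Real.exp_pos _)
  have hintF : IntegrableOn hF 𝒜 :=
    integOn hF (Real.exp M) hFm (fun a ha => by rw [habsF a]; exact hFub a ha)
  have hintG : IntegrableOn hG 𝒜 :=
    integOn hG (Real.exp M) hGm (fun a ha => by rw [habsG a]; exact hGub a ha)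
  have hintwF : IntegrableOn (fun a => w a * hF a) 𝒜 :=
    integOn _ (2 * (B * C) * Real.exp M) (hwm.mul hFm) (fun a ha => by
      rw [abs_mul, habsF a]
      exact mul_le_mul (hwbd a ha) (hFub a ha) (Real.exp_pos _).le (by positivity))
  have hintwG : IntegrableOn (fun a => w a * hG a) 𝒜 :=
    integOn _ (2 * (B * C) * Real.exp M) (hwm.mul hGm) (fun a ha => by
      rw [abs_mul, habsG a]
      exact mul_le_mul (hwbd a ha) (hGub a ha) (Real.exp_pos _).le (by positivity))
  have hintδG : IntegrableOn (fun a => δ a * hG a) 𝒜 :=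
    integOn _ (2 * (B * C) * Real.exp M) (hδm.mul hGm) (fun a ha => by
      rw [abs_mul, habsG a]
      exact mul_le_mul (hδbd a ha) (hGub a ha) (Real.exp_pos _).le (by positivity))
  -- integrals
  set If := ∫ a in 𝒜, hF a with hIfdef
  set Ig := ∫ a in 𝒜, hG a with hIgdef
  set Jf := ∫ a in 𝒜, w a * hF a with hJfdef
  set Jg := ∫ a in 𝒜, w a * hG a with hJgdef
  set Sg := ∫ a in 𝒜, δ a * hG a with hSgdef
  have hvolR : 0 < (volume 𝒜).toReal := ENNReal.toReal_pos h𝒜0.ne' hvol_ne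
  have hIpos : ∀ (H : EuclideanSpace ℝ (Fin m) → ℝ), IntegrableOn H 𝒜 →
      (∀ a ∈ 𝒜, Real.exp (-M) ≤ H a) → 0 < ∫ a in 𝒜, H a := by
    intro H hint hlb
    have h1 : ∫ _ in 𝒜, Real.exp (-M) ≤ ∫ a in 𝒜, H a :=
      setIntegral_mono_on (integrableOn_const hvol_ne) hint hAm hlb
    rw [setIntegral_const, smul_eq_mul] at h1
    change (volume 𝒜).toReal * Real.exp (-M) ≤ _ at h1
    nlinarith [Real.exp_pos (-M)]
  have hIfpos : 0 < If := hIpos hF hintF hFlb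
  have hIgpos : 0 < Ig := hIpos hG hintG hGlb
  -- closed forms
  have eqf := gibbsG_eq_s12 𝒜 γ hγ.ne' f f r z' Z' hIfpos hintwF hintF
  have hgsplit : (fun a => (⟪f a, Z'⟫ - ⟪g a, z'⟫) * hG a)
      = fun a => w a * hG a + δ a * hG a := by
    funext a; rw [hwdef, hδdef]; ring
  have eqg := gibbsG_eq_s12 𝒜 γ hγ.ne' f g r z' Z' hIgpos
    (hgsplit ▸ (hintwG.add hintδG)) hintG
  have hsplit : ∫ a in 𝒜, (⟪f a, Z'⟫ - ⟪g a, z'⟫) * hG a = Jg + Sg := by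
    rw [hgsplit, integral_add hintwG hintδG, hJgdef, hSgdef]
  rw [hsplit] at eqg
  -- difference identity
  have hD : gibbsG 𝒜 γ f g r z' Z' - gibbsG 𝒜 γ f f r z' Z'
      = (Jg / Ig - Jf / If) + Sg / Ig + γ * (Real.log Ig - Real.log If) := by
    rw [eqg, eqf]
    ring
  -- abs-of-integral helper
  have habsint : ∀ (F : EuclideanSpace ℝ (Fin m) → ℝ),
      |∫ a in 𝒜, F a| ≤ ∫ a in 𝒜, |F a| := by
    intro F
    simpa [Real.norm_eq_abs] using
      norm_integral_le_integral_norm (μ := volume.restrict 𝒜) F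
  -- generic bound
  have hbnd : ∀ (F : EuclideanSpace ℝ (Fin m) → ℝ) (K : ℝ), IntegrableOn F 𝒜 → 0 ≤ K →
      (∀ a ∈ 𝒜, |F a| ≤ K * hG a) → |∫ a in 𝒜, F a| ≤ K * Ig := by
    intro F K hint hK hb
    refine (habsint F).trans ?_
    have := setIntegral_mono_on hint.abs (hintG.const_mul K) hAm hb
    rwa [integral_const_mul, ← hIgdef] at this
  set e1 := Real.exp (ε / γ) - 1 with he1def
  have he1nn : 0 ≤ e1 := by
    have : (1 : ℝ) ≤ Real.exp (ε / γ) := Real.one_le_exp (by positivity)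
    rw [he1def]; linarith
  have hFG : ∀ a, hF a = hG a * Real.exp (δ a / γ) := by
    intro a
    simp only [hFdef, hGdef, hδdef]
    rw [← Real.exp_add]
    exact congrArg Real.exp (by ring)
  have hFGd : ∀ a ∈ 𝒜, |hF a - hG a| ≤ e1 * hG a := by
    intro a ha
    rw [hFG a]
    have h0 : hG a * Real.exp (δ a / γ) - hG a = hG a * (Real.exp (δ a / γ) - 1) := by ring
    rw [h0, abs_mul, habsG a, mul_comm e1 (hG a)]
    refine mul_le_mul_of_nonneg_left ?_ (Real.exp_pos _).le
    rw [he1def]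
    refine exp_sub_one_abs_le ?_
    rw [abs_div, abs_of_pos hγ, div_le_div_iff_of_pos_right hγ]
    exact hδε a ha
  have hIdiff : |If - Ig| ≤ e1 * Ig := by
    have h1 : If - Ig = ∫ a in 𝒜, (hF a - hG a) := by
      rw [integral_sub hintF hintG]
    rw [h1]
    exact hbnd _ e1 (hintF.sub hintG) he1nn hFGd
  have hJdiff : |Jg - Jf| ≤ 2 * (B * C) * e1 * Ig := by
    have h1 : Jg - Jf = ∫ a in 𝒜, (w a * hG a - w a * hF a) := by
      rw [integral_sub hintwG hintwF]
    rw [h1]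
    refine hbnd _ (2 * (B * C) * e1) (hintwG.sub hintwF) (by positivity) ?_
    intro a ha
    have h2 : w a * hG a - w a * hF a = -(w a * (hF a - hG a)) := by ring
    rw [h2, abs_neg, abs_mul]
    calc |w a| * |hF a - hG a| ≤ (2 * (B * C)) * (e1 * hG a) :=
          mul_le_mul (hwbd a ha) (hFGd a ha) (abs_nonneg _) (by positivity)
      _ = 2 * (B * C) * e1 * hG a := by ring
  have hJf : |Jf| ≤ 2 * (B * C) * If := by
    refine (habsint _).trans ?_
    have h1 := setIntegral_mono_on hintwF.abs (hintF.const_mul (2 * (B * C))) hAm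
      (fun a ha => by
        rw [abs_mul, habsF a]
        exact mul_le_mul_of_nonneg_right (hwbd a ha) (Real.exp_pos _).le)
    rwa [integral_const_mul, ← hIfdef] at h1
  have hSg : |Sg| ≤ ε * Ig := by
    refine hbnd _ ε hintδG hεnn ?_
    intro a ha
    rw [abs_mul, habsG a]
    exact mul_le_mul_of_nonneg_right (hδε a ha) (Real.exp_pos _).le
  -- log bound
  have hIgIf : Ig ≤ Real.exp (ε / γ) * If := by
    have h1 : ∀ a ∈ 𝒜, hG a ≤ Real.exp (ε / γ) * hF a := by
      intro a ha
      rw [hFG a]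
      have hd : 0 ≤ (δ a + ε) / γ :=
        div_nonneg (by linarith [neg_le_of_abs_le (hδε a ha)]) hγ.le
      calc hG a = hG a * 1 := (mul_one _).symm
        _ ≤ hG a * Real.exp ((δ a + ε) / γ) :=
            mul_le_mul_of_nonneg_left (Real.one_le_exp hd) (Real.exp_pos _).le
        _ = Real.exp (ε / γ) * (hG a * Real.exp (δ a / γ)) := by
            rw [add_div, Real.exp_add]; ring
    have h2 := setIntegral_mono_on hintG (hintF.const_mul (Real.exp (ε / γ))) hAm h1
    rwa [integral_const_mul, ← hIfdef, ← hIgdef] at h2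
  have hIfIg : If ≤ Real.exp (ε / γ) * Ig := by
    have h1 : ∀ a ∈ 𝒜, hF a ≤ Real.exp (ε / γ) * hG a := by
      intro a ha
      rw [hFG a, mul_comm (Real.exp (ε / γ)) (hG a)]
      refine mul_le_mul_of_nonneg_left ?_ (Real.exp_pos _).le
      refine Real.exp_le_exp.2 ?_
      rw [div_le_div_iff_of_pos_right hγ]
      exact le_of_abs_le (hδε a ha)
    have h2 := setIntegral_mono_on hintF (hintG.const_mul (Real.exp (ε / γ))) hAm h1
    rwa [integral_const_mul, ← hIfdef, ← hIgdef] at h2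
  have hlog : |Real.log Ig - Real.log If| ≤ ε / γ := by
    rw [abs_le]
    constructor
    · have h1 : Real.log If ≤ Real.log (Real.exp (ε / γ) * Ig) :=
        Real.log_le_log hIfpos hIfIg
      rw [Real.log_mul (Real.exp_ne_zero _) hIgpos.ne', Real.log_exp] at h1
      linarith
    · have h1 : Real.log Ig ≤ Real.log (Real.exp (ε / γ) * If) :=
        Real.log_le_log hIgpos hIgIf
      rw [Real.log_mul (Real.exp_ne_zero _) hIfpos.ne', Real.log_exp] at h1
      linarith
  -- main fraction bound
  have key3 : |Jg / Ig - Jf / If| ≤ 4 * (B * C) * e1 := by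
    rw [div_sub_div _ _ hIgpos.ne' hIfpos.ne', abs_div,
      abs_of_pos (mul_pos hIgpos hIfpos), div_le_iff₀ (mul_pos hIgpos hIfpos)]
    have h2 : |Jg * If - Ig * Jf| ≤ |Jg - Jf| * If + |Jf| * |If - Ig| := by
      have h3 : Jg * If - Ig * Jf = (Jg - Jf) * If + Jf * (If - Ig) := by ring
      rw [h3]
      refine (abs_add_le _ _).trans ?_
      rw [abs_mul, abs_mul, abs_of_pos hIfpos]
    have h4 : |Jg - Jf| * If ≤ (2 * (B * C) * e1 * Ig) * If :=
      mul_le_mul_of_nonneg_right hJdiff hIfpos.le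
    have h5 : |Jf| * |If - Ig| ≤ (2 * (B * C) * If) * (e1 * Ig) :=
      mul_le_mul hJf hIdiff (abs_nonneg _) (by positivity)
    nlinarith
  have hSgd : |Sg / Ig| ≤ ε := by
    rw [abs_div, abs_of_pos hIgpos, div_le_iff₀ hIgpos]
    exact hSg
  have hlogd : |γ * (Real.log Ig - Real.log If)| ≤ ε := by
    rw [abs_mul, abs_of_pos hγ]
    calc γ * |Real.log Ig - Real.log If| ≤ γ * (ε / γ) :=
          mul_le_mul_of_nonneg_left hlog hγ.le
      _ = ε := by field_simp
  -- assemble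
  have hmain : |gibbsG 𝒜 γ f g r z' Z' - gibbsG 𝒜 γ f f r z' Z'|
      ≤ 4 * (B * C) * e1 + ε + ε := by
    rw [hD]
    calc |Jg / Ig - Jf / If + Sg / Ig + γ * (Real.log Ig - Real.log If)|
        ≤ |Jg / Ig - Jf / If + Sg / Ig| + |γ * (Real.log Ig - Real.log If)| := abs_add_le _ _
      _ ≤ |Jg / Ig - Jf / If| + |Sg / Ig| + |γ * (Real.log Ig - Real.log If)| := by
          linarith [abs_add_le (Jg / Ig - Jf / If) (Sg / Ig)]
      _ ≤ 4 * (B * C) * e1 + ε + ε := by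
          exact add_le_add (add_le_add key3 hSgd) hlogd
  -- final comparison
  set E := Real.exp (2 * (B * C + R) / γ) with hEdef
  have hEpos : 0 < E := Real.exp_pos _
  have he1b : e1 ≤ ε / γ * E := by
    have h1 : ε / γ ≤ 2 * (B * C + R) / γ := by
      rw [div_le_div_iff_of_pos_right hγ]
      nlinarith
    calc e1 ≤ ε / γ * Real.exp (ε / γ) := exp_sub_one_le_mul (by positivity)
      _ ≤ ε / γ * E := by
          rw [hEdef]
          exact mul_le_mul_of_nonneg_left (Real.exp_le_exp.2 h1) (by positivity)
  have hfin : 4 * (B * C) * e1 + ε + ε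
      ≤ 2 * (1 + 2 * (B * C + R) / γ * E) * ε := by
    have h1 : 4 * (B * C) * e1 ≤ 4 * (B * C) * (ε / γ * E) :=
      mul_le_mul_of_nonneg_left he1b (by positivity)
    have h2 : 4 * (B * C) * (ε / γ * E) ≤ 4 * (B * C + R) * (ε / γ * E) := by
      have : 0 ≤ ε / γ * E := by positivity
      nlinarith
    have h3 : 4 * (B * C + R) * (ε / γ * E) = 2 * (2 * (B * C + R) / γ * E) * ε := by
      field_simp
      ring
    nlinarith
  exact hmain.trans hfin
end
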